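/- Let G be a topological group and D a normal subgroup of G such that D is discrete in the subspace topology and D is dense in G (equivalently, the quotient G/D is indiscrete). Then the closure N of {e_G} in G is an open subgroup of G, and G is topologically isomorphic to the product D × N where D carries the discrete topology and N the indiscrete topology. -/

import Mathlib

open Set

theorem stmt13 (G : Type*) [Group G] [TopologicalSpace G] [IsTopologicalGroup G]
    (D : Subgroup G) [D.Normal] [DiscreteTopology D] (hD : Dense (D : Set G)) :
    IsOpen (((⊥ : Subgroup G).topologicalClosure : Set G)) ∧
    (∀ U : Set ((⊥ : Subgroup G).topologicalClosure), IsOpen U → U = ∅ ∨ U = Set.univ) ∧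
    ∃ e : G ≃* D × (⊥ : Subgroup G).topologicalClosure,
      Continuous e ∧ Continuous e.symm := by
  set N : Subgroup G := (⊥ : Subgroup G).topologicalClosure with hN
  have hNcoe : (N : Set G) = closure ({1} : Set G) :=
    Subgroup.coe_topologicalClosure_bot G
  -- an isolating open set for a point d of D
  have isolate : ∀ d : D, ∃ V : Set G, IsOpen V ∧ (d : G) ∈ V ∧
      ∀ d' : D, (d' : G) ∈ V → d' = d := by
    intro d
    have h1 : IsOpen ({d} : Set D) := isOpen_discrete _
    rw [isOpen_induced_iff] at h1
    obtain ⟨V, hVopen, hV⟩ := h1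
    refine ⟨V, hVopen, ?_, ?_⟩
    · have : d ∈ (Subtype.val ⁻¹' V : Set D) := by rw [hV]; rfl
      exact this
    · intro d' hd'
      have : d' ∈ (Subtype.val ⁻¹' V : Set D) := hd'
      rw [hV] at this; exact this
  obtain ⟨U, hUopen, hU1, hUD⟩ := isolate 1
  -- U ⊆ N
  have hUN : U ⊆ (N : Set G) := by
    rw [hNcoe]
    intro x hx
    rw [mem_closure_iff]
    intro O hO hxO
    obtain ⟨d, ⟨hdO, hdU⟩, hdD⟩ := hD.inter_open_nonempty (O ∩ U)
      (hO.inter hUopen) ⟨x, hxO, hx⟩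
    have : (⟨d, hdD⟩ : D) = 1 := hUD ⟨d, hdD⟩ hdU
    have hd1 : d = 1 := congrArg Subtype.val this
    exact ⟨1, hd1 ▸ hdO, rfl⟩
  -- N is open
  have hNopen : IsOpen (N : Set G) :=
    Subgroup.isOpen_of_mem_nhds N (Filter.mem_of_superset (hUopen.mem_nhds hU1) hUN)
  -- key: if V open and 1 ∈ V then N ⊆ V
  have key : ∀ V : Set G, IsOpen V → (1 : G) ∈ V → (N : Set G) ⊆ V := by
    intro V hV h1V y hy
    have hyinv : (y⁻¹ : G) ∈ (N : Set G) := N.inv_mem hy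
    rw [hNcoe, mem_closure_iff] at hyinv
    obtain ⟨z, hz1, hz2⟩ := hyinv ((y * ·) ⁻¹' V) (hV.preimage (continuous_mul_left y))
      (by show y * y⁻¹ ∈ V; rwa [mul_inv_cancel])
    simp only [mem_singleton_iff] at hz2
    subst hz2
    simpa using hz1
  -- indiscreteness of N
  have indis : ∀ W : Set N, IsOpen W → W = ∅ ∨ W = Set.univ := by
    intro W hW
    rw [isOpen_induced_iff] at hW
    obtain ⟨V, hVopen, hV⟩ := hW
    rcases W.eq_empty_or_nonempty with h | ⟨⟨x, hxN⟩, hxW⟩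
    · exact Or.inl h
    right
    have hxV : x ∈ V := by rw [← hV] at hxW; exact hxW
    have h1V : (1 : G) ∈ V := by
      have hx := hxN
      rw [← SetLike.mem_coe, hNcoe, mem_closure_iff] at hx
      obtain ⟨z, hzV, hz1⟩ := hx V hVopen hxV
      rw [mem_singleton_iff] at hz1
      rwa [hz1] at hzV
    ext ⟨y, hyN⟩
    simp only [mem_univ, iff_true]
    rw [← hV]
    exact key V hVopen h1V hyN
  refine ⟨hNopen, indis, ?_⟩
  -- D and N are disjoint
  have hdisj : Disjoint D N := by
    rw [Subgroup.disjoint_def]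
    intro x hxD hxN
    obtain ⟨V, hVopen, hxV, hViso⟩ := isolate ⟨x, hxD⟩
    have h1V : (1 : G) ∈ V := by
      rw [← SetLike.mem_coe, hNcoe, mem_closure_iff] at hxN
      obtain ⟨z, hzV, hz1⟩ := hxN V hVopen hxV
      rw [mem_singleton_iff] at hz1
      rwa [hz1] at hzV
    have := hViso 1 h1V
    exact (congrArg Subtype.val this).symm
  have hNnormal : N.Normal := Subgroup.is_normal_topologicalClosure ⊥
  haveI := hNnormal
  -- D ⊔ N = ⊤
  have hsup : D ⊔ N = ⊤ := by
    have hopen : IsOpen ((D ⊔ N : Subgroup G) : Set G) :=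
      Subgroup.isOpen_mono (le_sup_right : N ≤ D ⊔ N) hNopen
    have hclosed : IsClosed ((D ⊔ N : Subgroup G) : Set G) :=
      Subgroup.isClosed_of_isOpen _ hopen
    rw [eq_top_iff]
    intro g _
    have hg : g ∈ closure (D : Set G) := hD g
    have hsub : closure (D : Set G) ⊆ ((D ⊔ N : Subgroup G) : Set G) :=
      hclosed.closure_subset_iff.mpr (SetLike.coe_subset_coe.mpr le_sup_left)
    exact hsub hg
  -- commuting
  have hcomm : ∀ (d : D) (n : N), Commute (D.subtype d) (N.subtype n) := fun d n =>
    Subgroup.commute_of_normal_of_disjoint D N ‹D.Normal› hNnormal hdisj d n d.2 n.2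
  set φ : D × N →* G := MonoidHom.noncommCoprod D.subtype N.subtype hcomm with hφ
  have hφapp : ∀ p : D × N, φ p = (p.1 : G) * (p.2 : G) := fun p => rfl
  have hφbij : Function.Bijective φ := by
    constructor
    · rintro ⟨d₁, n₁⟩ ⟨d₂, n₂⟩ h
      rw [hφapp, hφapp] at h
      have h3 : (d₁ : G) = (d₂ : G) * ((n₂ : G) * (n₁ : G)⁻¹) := by
        rw [← mul_assoc]; exact eq_mul_inv_of_mul_eq h
      have hx : (d₂ : G)⁻¹ * (d₁ : G) ∈ D := D.mul_mem (D.inv_mem d₂.2) d₁.2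
      have hx' : (d₂ : G)⁻¹ * (d₁ : G) ∈ N := by
        rw [h3, ← mul_assoc, inv_mul_cancel, one_mul]
        exact N.mul_mem n₂.2 (N.inv_mem n₁.2)
      have h1 : (d₂ : G)⁻¹ * (d₁ : G) = 1 := Subgroup.disjoint_def.mp hdisj hx hx'
      have hd : (d₁ : G) = d₂ := by
        rw [inv_mul_eq_one] at h1; exact h1.symm
      have hn : (n₁ : G) = n₂ := by
        rw [hd] at h
        exact mul_left_cancel h
      exact Prod.ext (Subtype.ext hd) (Subtype.ext hn)
    · intro g
      have hg : g ∈ ((D ⊔ N : Subgroup G) : Set G) := by rw [hsup]; trivial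
      rw [Subgroup.mul_normal D N] at hg
      obtain ⟨d, hd, n, hn, hdn⟩ := hg
      exact ⟨(⟨d, hd⟩, ⟨n, hn⟩), hdn⟩
  set e : G ≃* D × N := (MulEquiv.ofBijective φ hφbij).symm with he
  have hesymm : ∀ p : D × N, e.symm p = (p.1 : G) * (p.2 : G) := fun p => rfl
  have heinv : ∀ g : G, ((e g).1 : G) * ((e g).2 : G) = g := by
    intro g
    have := e.symm_apply_apply g
    rwa [hesymm] at this
  -- first component is 1 on N
  have hfst1 : ∀ n : G, n ∈ N → (e n).1 = 1 := by
    intro n hn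
    have h1 : ((e n).1 : G) = n * ((e n).2 : G)⁻¹ := eq_mul_inv_of_mul_eq (heinv n)
    have hmem : ((e n).1 : G) ∈ N := by
      rw [h1]; exact N.mul_mem hn (N.inv_mem (e n).2.2)
    exact Subtype.ext (Subgroup.disjoint_def.mp hdisj (e n).1.2 hmem)
  have hc1 : Continuous fun g : G => (e g).1 := by
    apply IsLocallyConstant.continuous
    rw [IsLocallyConstant.iff_exists_open]
    intro x
    refine ⟨(fun g => x⁻¹ * g) ⁻¹' (N : Set G),
      hNopen.preimage (continuous_mul_left x⁻¹), by simpa using N.one_mem, ?_⟩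
    intro y hy
    have hxy : x⁻¹ * y ∈ N := hy
    have : y = x * (x⁻¹ * y) := by rw [← mul_assoc, mul_inv_cancel, one_mul]
    calc (e y).1 = (e (x * (x⁻¹ * y))).1 := by rw [← this]
      _ = ((e x) * (e (x⁻¹ * y))).1 := by rw [map_mul]
      _ = (e x).1 * (e (x⁻¹ * y)).1 := rfl
      _ = (e x).1 * 1 := by rw [hfst1 _ hxy]
      _ = (e x).1 := mul_one _
  have hc2 : Continuous fun g : G => (e g).2 := by
    rw [continuous_def]
    intro W hW
    rcases indis W hW with h | h <;> simp [h]
  have hce : Continuous e := hc1.prodMk hc2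
  have hcesymm : Continuous e.symm := by
    have : Continuous fun p : D × N => (p.1 : G) * (p.2 : G) :=
      (continuous_subtype_val.comp continuous_fst).mul
        (continuous_subtype_val.comp continuous_snd)
    exact this
  exact ⟨e, hce, hcesymm⟩
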